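/- The span over ℝ of the three vectors p_B, B₁·p_B, B₁⁻¹·p_B in ℂ³ is invariant under both B and B₁, and the three vectors are linearly independent over ℂ. -/
import Mathlib


open Matrix Complex

noncomputable def A : Matrix (Fin 3) (Fin 3) ℂ :=
  !![1, -(Real.sqrt 2 : ℂ), (Real.sqrt 3 : ℂ) * Complex.I - 1;
     0, 1, (Real.sqrt 2 : ℂ);
     0, 0, 1]

noncomputable def B : Matrix (Fin 3) (Fin 3) ℂ :=
  !![1, 0, 0;
     (Real.sqrt 2 : ℂ), 1, 0;
     -(Real.sqrt 3 : ℂ) * Complex.I - 1, -(Real.sqrt 2 : ℂ), 1]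

noncomputable def B₁ : Matrix (Fin 3) (Fin 3) ℂ := A * B ^ 2 * A⁻¹

def pB : Fin 3 → ℂ := ![0, 0, 1]

noncomputable def herm (z w : Fin 3 → ℂ) : ℂ :=
  (starRingEnd ℂ) (z 0) * w 2 + (starRingEnd ℂ) (z 1) * w 1 + (starRingEnd ℂ) (z 2) * w 0

noncomputable def realSpan : Submodule ℝ (Fin 3 → ℂ) :=
  Submodule.span ℝ {pB, B₁.mulVec pB, B₁⁻¹.mulVec pB}

/-! ### Auxiliary definitions -/

lemma hs2 : (Real.sqrt 2 : ℂ) ^ 2 = 2 := by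
  rw [← Complex.ofReal_pow, Real.sq_sqrt (by norm_num : (0:ℝ) ≤ 2)]; norm_num

lemma hs3 : (Real.sqrt 3 : ℂ) ^ 2 = 3 := by
  rw [← Complex.ofReal_pow, Real.sq_sqrt (by norm_num : (0:ℝ) ≤ 3)]; norm_num

noncomputable def Ainv : Matrix (Fin 3) (Fin 3) ℂ :=
  !![1, (Real.sqrt 2 : ℂ), -1 - (Real.sqrt 3 : ℂ) * I;
     0, 1, -(Real.sqrt 2 : ℂ);
     0, 0, 1]

noncomputable def M : Matrix (Fin 3) (Fin 3) ℂ :=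
  !![7 - 2*(Real.sqrt 3 : ℂ)*I, 8*(Real.sqrt 2 : ℂ) - 4*(Real.sqrt 2 : ℂ)*(Real.sqrt 3 : ℂ)*I, -16;
     -2*(Real.sqrt 2 : ℂ) - 2*(Real.sqrt 2 : ℂ)*(Real.sqrt 3 : ℂ)*I, -7 - 4*(Real.sqrt 3 : ℂ)*I, 4*(Real.sqrt 2 : ℂ)*(Real.sqrt 3 : ℂ)*I;
     -4 - 2*(Real.sqrt 3 : ℂ)*I, -6*(Real.sqrt 2 : ℂ) - 2*(Real.sqrt 2 : ℂ)*(Real.sqrt 3 : ℂ)*I, 3 + 6*(Real.sqrt 3 : ℂ)*I]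

noncomputable def N : Matrix (Fin 3) (Fin 3) ℂ :=
  !![3 - 6*(Real.sqrt 3 : ℂ)*I, -4*(Real.sqrt 2 : ℂ)*(Real.sqrt 3 : ℂ)*I, -16;
     -6*(Real.sqrt 2 : ℂ) + 2*(Real.sqrt 2 : ℂ)*(Real.sqrt 3 : ℂ)*I, -7 + 4*(Real.sqrt 3 : ℂ)*I, 8*(Real.sqrt 2 : ℂ) + 4*(Real.sqrt 2 : ℂ)*(Real.sqrt 3 : ℂ)*I;
     -4 + 2*(Real.sqrt 3 : ℂ)*I, -2*(Real.sqrt 2 : ℂ) + 2*(Real.sqrt 2 : ℂ)*(Real.sqrt 3 : ℂ)*I, 7 + 2*(Real.sqrt 3 : ℂ)*I]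

noncomputable def w1 : Fin 3 → ℂ := ![-16, 4*(Real.sqrt 2 : ℂ)*(Real.sqrt 3 : ℂ)*I, 3 + 6*(Real.sqrt 3 : ℂ)*I]
noncomputable def w2 : Fin 3 → ℂ := ![-16, 8*(Real.sqrt 2 : ℂ) + 4*(Real.sqrt 2 : ℂ)*(Real.sqrt 3 : ℂ)*I, 7 + 2*(Real.sqrt 3 : ℂ)*I]

/-! ### Generic matrix identities -/

lemma gen1 (s t : ℂ) (hs : s^2 = 2) (ht : t^2 = 3) :
    !![(1:ℂ),-s,t*I-1;0,1,s;0,0,1] * !![1,s,-1-t*I;0,1,-s;0,0,1] = 1 := by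
  have hI : (I:ℂ)^2 = -1 := Complex.I_sq
  rw [Matrix.one_fin_three]
  ext i j
  fin_cases i <;> fin_cases j <;>
    simp [Matrix.mul_apply, Fin.sum_univ_three, Matrix.vecHead, Matrix.vecTail, -mul_eq_zero] <;>
    linear_combination hs

lemma gen2 (s t : ℂ) (hs : s^2 = 2) (ht : t^2 = 3) :
    !![(1:ℂ),-s,t*I-1;0,1,s;0,0,1] *
      (!![(1:ℂ),0,0;s,1,0;-t*I-1,-s,1] * !![(1:ℂ),0,0;s,1,0;-t*I-1,-s,1]) *
      !![(1:ℂ),s,-1-t*I;0,1,-s;0,0,1] =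
    !![7 - 2*t*I, 8*s - 4*s*t*I, -16;
       -2*s - 2*s*t*I, -7 - 4*t*I, 4*s*t*I;
       -4 - 2*t*I, -6*s - 2*s*t*I, 3 + 6*t*I] := by
  have hI : (I:ℂ)^2 = -1 := Complex.I_sq
  ext i j
  fin_cases i <;> fin_cases j <;>
    simp [Matrix.mul_apply, Fin.sum_univ_three, Matrix.vecHead, Matrix.vecTail, -mul_eq_zero]
  · linear_combination ((-1:ℂ) + (-1:ℂ)*t*I) * hs + ((-2:ℂ)*I^2) * ht + ((-6:ℂ)) * hI
  · linear_combination ((-1:ℂ)*s + (-1:ℂ)*s*t*I) * hs + ((-2:ℂ)*s*I^2) * ht + ((-6:ℂ)*s) * hI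
  · linear_combination ((4:ℂ)*t*I + t^2*I^2) * hs + ((4:ℂ)*I^2 + (2:ℂ)*t*I^3) * ht + ((12:ℂ) + (6:ℂ)*t*I) * hI
  · linear_combination ((-1:ℂ)*s) * hs
  · linear_combination ((-4:ℂ) + (-2:ℂ)*t*I + (-1:ℂ)*s^2) * hs
  · linear_combination ((3:ℂ)*s + s*t*I) * hs + ((2:ℂ)*s*I^2) * ht + ((6:ℂ)*s) * hI
  · linear_combination ((-1:ℂ)) * hs
  · linear_combination ((-1:ℂ)*s) * hs
  · linear_combination ((3:ℂ) + t*I) * hs + ((2:ℂ)*I^2) * ht + ((6:ℂ)) * hI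

lemma gen3 (s t : ℂ) (hs : s^2 = 2) (ht : t^2 = 3) :
    !![7 - 2*t*I, 8*s - 4*s*t*I, -16;
       -2*s - 2*s*t*I, -7 - 4*t*I, 4*s*t*I;
       -4 - 2*t*I, -6*s - 2*s*t*I, 3 + 6*t*I] *
    !![3 - 6*t*I, -4*s*t*I, -16;
       -6*s + 2*s*t*I, -7 + 4*t*I, 8*s + 4*s*t*I;
       -4 + 2*t*I, -2*s + 2*s*t*I, 7 + 2*t*I] = 1 := by
  have hI : (I:ℂ)^2 = -1 := Complex.I_sq
  rw [Matrix.one_fin_three]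
  ext i j
  fin_cases i <;> fin_cases j <;>
    simp [Matrix.mul_apply, Fin.sum_univ_three, Matrix.vecHead, Matrix.vecTail, -mul_eq_zero]
  · linear_combination ((-48:ℂ) + (40:ℂ)*t*I + (-8:ℂ)*t^2*I^2) * hs + ((-4:ℂ)*I^2) * ht + ((-12:ℂ)) * hI
  · linear_combination ((-8:ℂ)*s*I^2) * ht + ((-24:ℂ)*s) * hI
  · linear_combination ((64:ℂ) + (-16:ℂ)*t^2*I^2) * hs + ((-32:ℂ)*I^2) * ht + ((-96:ℂ)) * hI
  · linear_combination ((12:ℂ)*s*I^2) * ht + ((36:ℂ)*s) * hI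
  · linear_combination ((16:ℂ)*t^2*I^2) * hs + ((16:ℂ)*I^2) * ht + ((48:ℂ)) * hI
  · linear_combination ((-8:ℂ)*s*I^2) * ht + ((-24:ℂ)*s) * hI
  · linear_combination ((36:ℂ) + (-4:ℂ)*t^2*I^2) * hs + ((16:ℂ)*I^2) * ht + ((48:ℂ)) * hI
  · linear_combination ((12:ℂ)*s*I^2) * ht + ((36:ℂ)*s) * hI
  · linear_combination ((-48:ℂ) + (-40:ℂ)*t*I + (-8:ℂ)*t^2*I^2) * hs + ((-4:ℂ)*I^2) * ht + ((-12:ℂ)) * hI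

/-! ### Concrete identities -/

lemma hAAinv : A * Ainv = 1 := gen1 _ _ hs2 hs3

lemma hAinv : A⁻¹ = Ainv := inv_eq_right_inv hAAinv

lemma hB1M : B₁ = M := by
  rw [B₁, hAinv, pow_two]
  exact gen2 _ _ hs2 hs3

lemma hMN : M * N = 1 := gen3 _ _ hs2 hs3

lemma hB1inv : B₁⁻¹ = N := by rw [hB1M]; exact inv_eq_right_inv hMN

lemma hv1 : B₁.mulVec pB = w1 := by
  rw [hB1M]
  funext i
  fin_cases i <;>
    simp [M, w1, pB, Matrix.mulVec, dotProduct, Fin.sum_univ_three, Matrix.vecHead,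
      Matrix.vecTail, -mul_eq_zero]

lemma hv2 : B₁⁻¹.mulVec pB = w2 := by
  rw [hB1inv]
  funext i
  fin_cases i <;>
    simp [N, w2, pB, Matrix.mulVec, dotProduct, Fin.sum_univ_three, Matrix.vecHead,
      Matrix.vecTail, -mul_eq_zero]

lemma mem0 : pB ∈ realSpan := Submodule.subset_span (by left; rfl)
lemma mem1 : w1 ∈ realSpan := Submodule.subset_span (by right; left; exact hv1.symm)
lemma mem2 : w2 ∈ realSpan := Submodule.subset_span (by right; right; exact hv2.symm)

lemma hI : (I:ℂ)^2 = -1 := Complex.I_sq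

lemma hBpB : B.mulVec pB = pB := by
  funext i
  fin_cases i <;>
    simp [B, pB, Matrix.mulVec, dotProduct, Fin.sum_univ_three, Matrix.vecHead,
      Matrix.vecTail, -mul_eq_zero]

lemma hBw1 : B.mulVec w1 = (24:ℝ) • pB + (3:ℝ) • w1 - (2:ℝ) • w2 := by
  funext i
  fin_cases i <;>
    simp [B, pB, w1, w2, Matrix.mulVec, dotProduct, Fin.sum_univ_three, Matrix.vecHead,
      Matrix.vecTail, Complex.real_smul, -mul_eq_zero]
  · ring1
  · ring1
  · linear_combination ((-4:ℂ)*(Real.sqrt 3 : ℂ)*I) * hs2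

lemma hBw2 : B.mulVec w2 = (8:ℝ) • pB + (2:ℝ) • w1 - (1:ℝ) • w2 := by
  funext i
  fin_cases i <;>
    simp [B, pB, w1, w2, Matrix.mulVec, dotProduct, Fin.sum_univ_three, Matrix.vecHead,
      Matrix.vecTail, Complex.real_smul, -mul_eq_zero]
  · ring1
  · ring1
  · linear_combination ((-8:ℂ) + (-4:ℂ)*(Real.sqrt 3 : ℂ)*I) * hs2

lemma hMw1 : M.mulVec w1 = (-3:ℝ) • pB + (3:ℝ) • w1 + (1:ℝ) • w2 := by
  funext i
  fin_cases i <;>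
    simp [M, pB, w1, w2, Matrix.mulVec, dotProduct, Fin.sum_univ_three, Matrix.vecHead,
      Matrix.vecTail, Complex.real_smul, -mul_eq_zero]
  · linear_combination ((32:ℂ)*(Real.sqrt 3 : ℂ)*I + (-16:ℂ)*(Real.sqrt 3 : ℂ)^2*I^2) * hs2 + ((-32:ℂ)*I^2) * hs3 + ((-96:ℂ)) * hI
  · linear_combination ((8:ℂ)*(Real.sqrt 2 : ℂ)*I^2) * hs3 + ((24:ℂ)*(Real.sqrt 2 : ℂ)) * hI
  · linear_combination ((-24:ℂ)*(Real.sqrt 3 : ℂ)*I + (-8:ℂ)*(Real.sqrt 3 : ℂ)^2*I^2) * hs2 + ((20:ℂ)*I^2) * hs3 + ((60:ℂ)) * hI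

lemma hMw2 : M.mulVec w2 = pB := by
  have : M.mulVec (N.mulVec pB) = pB := by
    rw [Matrix.mulVec_mulVec, hMN, Matrix.one_mulVec]
  rwa [show N.mulVec pB = w2 by rw [← hB1inv]; exact hv2] at this

lemma spanB : ∀ v ∈ realSpan, B.mulVec v ∈ realSpan := by
  intro v hv
  have key : realSpan ≤ Submodule.comap ((Matrix.mulVecLin B).restrictScalars ℝ) realSpan := by
    apply Submodule.span_le.mpr
    rintro x (rfl | rfl | rfl) <;>
      simp only [SetLike.mem_coe, Submodule.mem_comap, LinearMap.coe_restrictScalars,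
        Matrix.mulVecLin_apply]
    · rw [hBpB]; exact mem0
    · rw [hv1, hBw1]
      exact sub_mem (add_mem (Submodule.smul_mem _ _ mem0) (Submodule.smul_mem _ _ mem1))
        (Submodule.smul_mem _ _ mem2)
    · rw [hv2, hBw2]
      exact sub_mem (add_mem (Submodule.smul_mem _ _ mem0) (Submodule.smul_mem _ _ mem1))
        (Submodule.smul_mem _ _ mem2)
  exact key hv

lemma spanB1 : ∀ v ∈ realSpan, B₁.mulVec v ∈ realSpan := by
  intro v hv
  have key : realSpan ≤ Submodule.comap ((Matrix.mulVecLin B₁).restrictScalars ℝ) realSpan := by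
    apply Submodule.span_le.mpr
    rintro x (rfl | rfl | rfl) <;>
      simp only [SetLike.mem_coe, Submodule.mem_comap, LinearMap.coe_restrictScalars,
        Matrix.mulVecLin_apply]
    · rw [hv1]; exact mem1
    · rw [hv1, hB1M, hMw1]
      exact add_mem (add_mem (Submodule.smul_mem _ _ mem0) (Submodule.smul_mem _ _ mem1))
        (Submodule.smul_mem _ _ mem2)
    · rw [hv2, hB1M, hMw2]; exact mem0
  exact key hv

noncomputable def T : Matrix (Fin 3) (Fin 3) ℂ := Matrix.of ![pB, w1, w2]

lemma hdetT : T.det = -128 * (Real.sqrt 2 : ℂ) := by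
  simp [T, Matrix.det_fin_three, pB, w1, w2, Matrix.vecHead, Matrix.vecTail]
  ring

lemma hTunit : IsUnit T := by
  rw [Matrix.isUnit_iff_isUnit_det, isUnit_iff_ne_zero, hdetT]
  have h2 : Real.sqrt 2 ≠ 0 := by positivity
  simp [Complex.ofReal_eq_zero, h2]

lemma linIndep : LinearIndependent ℂ ![pB, B₁.mulVec pB, B₁⁻¹.mulVec pB] := by
  rw [hv1, hv2]
  exact Matrix.linearIndependent_rows_iff_isUnit.mpr hTunit

theorem stmt_15 :
    (∀ v ∈ realSpan, B.mulVec v ∈ realSpan) ∧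
    (∀ v ∈ realSpan, B₁.mulVec v ∈ realSpan) ∧
    LinearIndependent ℂ ![pB, B₁.mulVec pB, B₁⁻¹.mulVec pB] :=
  ⟨spanB, spanB1, linIndep⟩
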